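/- arXiv:1809.10625 — 4 statements merged into one kernel-verified Lean document; each statement's English description precedes it below -/
import Mathlib

section
/- Let p be a prime number and let K = 𝔽_p((t)) be the field of formal Laurent series over the field with p elements (in Lean: LaurentSeries (ZMod p)). Let m be a positive integer not divisible by p, and let a = t^{-m} (the Laurent series single (-m) 1). Then there is no f ∈ K with f^p - f = a; that is, a does not lie in the image of the Artin–Schreier map ℘(x) = x^p - x on K. -/
open HahnSeries

theorem stmt_4 (p : ℕ) (hp : p.Prime) (m : ℕ) (hm : 0 < m) (hpm : ¬ (p ∣ m)) :
    ¬ ∃ f : LaurentSeries (ZMod p),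
      f ^ p - f = HahnSeries.single (-(m : ℤ)) (1 : ZMod p) := by
  haveI : Fact p.Prime := ⟨hp⟩
  rintro ⟨f, hf⟩
  have hone : (1 : ZMod p) ≠ 0 := one_ne_zero
  have hmneg : (-(m : ℤ)) < 0 := by exact_mod_cast neg_neg_of_pos (by exact_mod_cast hm)
  rcases eq_or_ne f 0 with rfl | hf0
  · have := congrArg (fun x : LaurentSeries (ZMod p) => x.coeff (-(m : ℤ))) hf
    simp [zero_pow hp.pos.ne', coeff_single_same] at this
  · have hford : (f ^ p).order = (p : ℤ) * f.order := by
      rw [order_pow]; simp [zsmul_eq_mul]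
    rcases lt_or_ge f.order 0 with hv | hv
    · -- order f < 0, so order (f^p) = p * v < v
      have hpv : (p : ℤ) * f.order < f.order := by
        have : (1 : ℤ) < (p : ℤ) := by exact_mod_cast hp.one_lt
        nlinarith
      have hcoef : (f ^ p - f).coeff ((p : ℤ) * f.order) ≠ 0 := by
        have hz : f.coeff ((p : ℤ) * f.order) = 0 := coeff_eq_zero_of_lt_order hpv
        rw [coeff_sub, hz, sub_zero]
        have := mt coeff_order_eq_zero.mp (pow_ne_zero p hf0)
        rwa [hford] at this
      have hne : (p : ℤ) * f.order = -(m : ℤ) := by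
        by_contra hne
        rw [hf, coeff_single, if_neg hne] at hcoef
        exact hcoef rfl
      apply hpm
      have : (p : ℤ) ∣ (m : ℤ) := ⟨-f.order, by linarith [hne]⟩
      exact_mod_cast this
    · -- order f ≥ 0: coeff at -m vanishes
      have h1 : f.coeff (-(m : ℤ)) = 0 :=
        coeff_eq_zero_of_lt_order (lt_of_lt_of_le hmneg hv)
      have h2 : (f ^ p).coeff (-(m : ℤ)) = 0 := by
        apply coeff_eq_zero_of_lt_order
        rw [hford]
        exact lt_of_lt_of_le hmneg (mul_nonneg (by positivity) hv)
      have := congrArg (fun x : LaurentSeries (ZMod p) => x.coeff (-(m : ℤ))) hf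
      simp [coeff_sub, h1, h2, coeff_single_same] at this
end

section
/- Let p be a prime number, let K = 𝔽_p((t)) be the field of formal Laurent series over the field with p elements (in Lean: LaurentSeries (ZMod p)), and let m be a positive integer not divisible by p. Then the polynomial X^p - X - t^{-m} (in Lean: X^p - X - C (single (-m) 1) in Polynomial K) is irreducible over K. -/
open Polynomial

section AS

variable {F : Type*} [Field F]

lemma as_monic (p : ℕ) (hp : 1 < p) (a : F) : (X ^ p - X - C a : F[X]).Monic := by
  have h : (X ^ p - X - C a : F[X]) = X ^ p - (X + C a) := by ring
  rw [h]
  apply monic_X_pow_sub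
  calc degree (X + C a : F[X]) ≤ 1 := by
        apply (degree_add_le _ _).trans
        rw [degree_X]
        exact max_le le_rfl (degree_C_le.trans (by norm_num))
      _ < (p : WithBot ℕ) := by exact_mod_cast hp

lemma as_degree (p : ℕ) (hp : 1 < p) (a : F) :
    (X ^ p - X - C a : F[X]).natDegree = p := by
  have h : (X ^ p - X - C a : F[X]) = X ^ p - (X + C a) := by ring
  rw [h]
  have hd : degree (X + C a : F[X]) < degree (X ^ p : F[X]) := by
    rw [degree_X_pow]
    calc degree (X + C a : F[X]) ≤ 1 := by
          apply (degree_add_le _ _).trans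
          rw [degree_X]
          exact max_le le_rfl (degree_C_le.trans (by norm_num))
        _ < (p : WithBot ℕ) := by exact_mod_cast hp
  have := degree_sub_eq_left_of_degree_lt hd
  rw [degree_X_pow] at this
  exact natDegree_eq_of_degree_eq_some this

lemma artin_schreier_irreducible (p : ℕ) (hp : p.Prime) [CharP F p] (a : F)
    (hna : ∀ x : F, x ^ p - x ≠ a) :
    Irreducible (X ^ p - X - C a : F[X]) := by
  classical
  haveI : Fact p.Prime := ⟨hp⟩
  set f : F[X] := X ^ p - X - C a with hf
  have hmono : f.Monic := as_monic p hp.one_lt a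
  have hdeg : f.natDegree = p := as_degree p hp.one_lt a
  set E := AlgebraicClosure F
  set φ := algebraMap F E with hφ
  have hφinj : Function.Injective φ := φ.injective
  haveI : CharP E p := charP_of_injective_algebraMap hφinj p
  set fE : E[X] := f.map φ with hfE
  have hfE_eq : fE = X ^ p - X - C (φ a) := by
    simp [hfE, hf, Polynomial.map_sub, Polynomial.map_pow]
  have hfE_monic : fE.Monic := hmono.map φ
  have hfE_ne : fE ≠ 0 := hfE_monic.ne_zero
  have hfE_deg : fE.natDegree = p := by
    rw [hfE, natDegree_map, hdeg]
  -- a root of fE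
  obtain ⟨α, hα⟩ : ∃ α : E, fE.IsRoot α := by
    apply IsAlgClosed.exists_root
    rw [degree_eq_natDegree hfE_ne, hfE_deg]
    exact_mod_cast hp.ne_zero
  have hαeq : α ^ p - α - φ a = 0 := by
    have := hα
    rw [IsRoot, hfE_eq] at this
    simpa using this
  -- natCast fixed by Frobenius
  have hfrob : ∀ i : ℕ, (i : E) ^ p = (i : E) := by
    intro i
    have : frobenius E p (i : E) = (i : E) := map_natCast (frobenius E p) i
    rwa [frobenius_def] at this
  -- all translates are roots
  have hrooti : ∀ i : ℕ, fE.IsRoot (α + i) := by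
    intro i
    rw [IsRoot, hfE_eq]
    simp only [eval_sub, eval_pow, eval_X, eval_C]
    rw [add_pow_char, hfrob]
    linear_combination hαeq
  -- multiset of roots
  set M : Multiset E := (Multiset.range p).map (fun i : ℕ => α + (i : E)) with hM
  have hMcard : Multiset.card M = p := by simp [hM]
  have hnatinj : ∀ i ∈ Multiset.range p, ∀ j ∈ Multiset.range p,
      α + (i : E) = α + (j : E) → i = j := by
    intro i hi j hj hij
    rw [Multiset.mem_range] at hi hj
    have : (i : E) = (j : E) := add_left_cancel hij
    have := (CharP.natCast_eq_natCast E p).mp this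
    exact (Nat.ModEq.eq_of_lt_of_lt this hi hj)
  have hMnodup : M.Nodup := Multiset.Nodup.map_on hnatinj (Multiset.nodup_range p)
  have hMle : M ≤ fE.roots := by
    rw [Multiset.le_iff_count]
    intro x
    by_cases hx : x ∈ M
    · have h1 : Multiset.count x M = 1 := by
        rw [Multiset.count_eq_one_of_mem hMnodup hx]
      rw [h1]
      rw [Multiset.one_le_count_iff_mem]
      obtain ⟨i, hi, rfl⟩ := Multiset.mem_map.mp hx
      exact (mem_roots hfE_ne).mpr (hrooti i)
    · rw [Multiset.count_eq_zero_of_notMem hx]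
      exact Nat.zero_le _
  have hMroots : fE.roots = M := by
    symm
    apply Multiset.eq_of_le_of_card_le hMle
    calc Multiset.card fE.roots ≤ fE.natDegree := fE.card_roots'
      _ = p := hfE_deg
      _ = Multiset.card M := hMcard.symm
  -- irreducibility
  constructor
  · exact not_isUnit_of_natDegree_pos f (by rw [hdeg]; exact hp.pos)
  intro g h hgh
  by_contra hcon
  push_neg at hcon
  obtain ⟨hgu, hhu⟩ := hcon
  have hfne : f ≠ 0 := hmono.ne_zero
  have hg0 : g ≠ 0 := by rintro rfl; simp at hgh; exact hfne hgh
  have hh0 : h ≠ 0 := by rintro rfl; simp at hgh; exact hfne hgh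
  have hdg1 : 0 < g.natDegree := by
    rcases Nat.eq_zero_or_pos g.natDegree with h0 | h0
    · obtain ⟨c, rfl⟩ := Polynomial.natDegree_eq_zero.mp h0
      exact absurd (isUnit_C.mpr (isUnit_iff_ne_zero.mpr (fun hc => hg0 (by rw [hc, map_zero])))) hgu
    · exact h0
  have hdh1 : 0 < h.natDegree := by
    rcases Nat.eq_zero_or_pos h.natDegree with h0 | h0
    · obtain ⟨c, rfl⟩ := Polynomial.natDegree_eq_zero.mp h0
      exact absurd (isUnit_C.mpr (isUnit_iff_ne_zero.mpr (fun hc => hh0 (by rw [hc, map_zero])))) hhu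
    · exact h0
  have hsum : g.natDegree + h.natDegree = p := by
    rw [← natDegree_mul hg0 hh0, ← hgh, hdeg]
  set d := g.natDegree with hd
  have hdltp : d < p := by omega
  -- monic version of g
  set g₀ : F[X] := g * C g.leadingCoeff⁻¹ with hg₀
  have hlc : g.leadingCoeff ≠ 0 := leadingCoeff_ne_zero.mpr hg0
  have hg₀monic : g₀.Monic := monic_mul_leadingCoeff_inv hg0
  have hg₀deg : g₀.natDegree = d := by
    rw [hg₀, natDegree_mul hg0 (by simp [inv_ne_zero hlc]), natDegree_C, add_zero]
  have hg₀dvd : g₀ ∣ f := by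
    have hC : (C g.leadingCoeff⁻¹ : F[X]) * C g.leadingCoeff = 1 := by
      rw [← C_mul, inv_mul_cancel₀ hlc, C_1]
    refine ⟨C g.leadingCoeff * h, ?_⟩
    rw [hgh, hg₀]
    calc g * h = g * ((C g.leadingCoeff⁻¹ * C g.leadingCoeff) * h) := by rw [hC, one_mul]
      _ = g * C g.leadingCoeff⁻¹ * (C g.leadingCoeff * h) := by ring
  -- map to E
  set G : E[X] := g₀.map φ with hG
  have hGmonic : G.Monic := hg₀monic.map φ
  have hGdvd : G ∣ fE := Polynomial.map_dvd φ hg₀dvd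
  have hGdeg : G.natDegree = d := by rw [hG, natDegree_map, hg₀deg]
  have hGsplits : G.Splits := IsAlgClosed.splits G
  have hGroots_card : Multiset.card G.roots = d := by
    rw [← hGdeg]
    exact (splits_iff_card_roots.mp hGsplits)
  have hGroots_le : G.roots ≤ fE.roots := roots.le_of_dvd hfE_ne hGdvd
  -- the sum of roots
  set S : Subfield E := φ.fieldRange with hS
  have hrange : ∀ r ∈ G.roots, r - α ∈ S := by
    intro r hr
    have : r ∈ M := by rw [← hMroots]; exact Multiset.mem_of_le hGroots_le hr
    obtain ⟨i, _, rfl⟩ := Multiset.mem_map.mp this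
    simp only [add_sub_cancel_left]
    exact_mod_cast natCast_mem S i
  set N : Multiset E := G.roots.map (fun r => r - α) with hN
  have hNsum : N.sum ∈ S := Subfield.multiset_sum_mem S N (by
    intro x hx
    obtain ⟨r, hr, rfl⟩ := Multiset.mem_map.mp hx
    exact hrange r hr)
  have hNsum_eq : N.sum = G.roots.sum - d • α := by
    rw [hN, Multiset.sum_map_sub]
    simp [hGroots_card]
  have hroots_sum : G.roots.sum = -G.nextCoeff := by
    rw [hGsplits.nextCoeff_eq_neg_sum_roots_of_monic hGmonic, neg_neg]
  have hnext : G.nextCoeff ∈ S := by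
    rw [hG, nextCoeff_map hφinj]
    exact ⟨g₀.nextCoeff, rfl⟩
  have hdα : d • α ∈ S := by
    have : d • α = G.roots.sum - N.sum := by rw [hNsum_eq]; ring
    rw [this, hroots_sum]
    exact S.sub_mem (S.neg_mem hnext) hNsum
  have hdE : (d : E) ≠ 0 := by
    rw [Ne, CharP.cast_eq_zero_iff E p]
    intro hdvd
    have := Nat.le_of_dvd hdg1 hdvd
    omega
  have hαS : α ∈ S := by
    have h1 : α = (d : E)⁻¹ * (d • α) := by
      rw [nsmul_eq_mul, ← mul_assoc, inv_mul_cancel₀ hdE, one_mul]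
    rw [h1]
    exact S.mul_mem (S.inv_mem ⟨d, by push_cast; rfl⟩) hdα
  obtain ⟨x, hx⟩ := hαS
  apply hna x
  have : φ (x ^ p - x - a) = 0 := by
    push_cast [map_sub, map_pow]
    rw [hx]
    exact hαeq
  have := hφinj (by rw [this, map_zero] : φ (x ^ p - x - a) = φ 0)
  linear_combination this

end AS

lemma laurent_no_root (p : ℕ) (hp : p.Prime) (m : ℕ) (hm : 0 < m) (hpm : ¬ (p ∣ m)) :
    ∀ x : LaurentSeries (ZMod p),
      x ^ p - x ≠ HahnSeries.single (-(m : ℤ)) (1 : ZMod p) := by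
  haveI : Fact p.Prime := ⟨hp⟩
  intro x hx
  have ha_ne : (HahnSeries.single (-(m : ℤ)) (1 : ZMod p) : LaurentSeries (ZMod p)) ≠ 0 :=
    HahnSeries.single_ne_zero one_ne_zero
  have ha_ord : (HahnSeries.single (-(m : ℤ)) (1 : ZMod p) : LaurentSeries (ZMod p)).orderTop
      = ((-(m : ℤ) : ℤ) : WithTop ℤ) := HahnSeries.orderTop_single one_ne_zero
  have hx0 : x ≠ 0 := by
    rintro rfl
    rw [zero_pow hp.ne_zero, sub_zero] at hx
    exact ha_ne hx.symm
  set v := x.order with hv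
  have hxot : x.orderTop = (v : WithTop ℤ) := (HahnSeries.order_eq_orderTop_of_ne_zero hx0).symm
  have hxp_ne : x ^ p ≠ 0 := pow_ne_zero _ hx0
  have hxpot : (x ^ p).orderTop = (((p : ℤ) * v : ℤ) : WithTop ℤ) := by
    rw [← HahnSeries.order_eq_orderTop_of_ne_zero hxp_ne, HahnSeries.order_pow]
    norm_cast
  rcases lt_or_ge v 0 with hneg | hpos
  · -- order x < 0 : orderTop (x^p - x) = p*v
    have hplt : (p : ℤ) * v < v := by
      have h2 : (2 : ℤ) ≤ (p : ℤ) := by exact_mod_cast hp.two_le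
      nlinarith
    have hlt : (x ^ p).orderTop < x.orderTop := by
      rw [hxpot, hxot]
      exact_mod_cast hplt
    have := HahnSeries.orderTop_sub hlt
    rw [hx, ha_ord, hxpot] at this
    have heq : -(m : ℤ) = (p : ℤ) * v := by exact_mod_cast this
    apply hpm
    have : (p : ℤ) ∣ (m : ℤ) := ⟨-v, by linarith⟩
    exact_mod_cast this
  · -- order x ≥ 0 : contradiction since -m < 0
    have h1 : (0 : WithTop ℤ) ≤ (x ^ p - x).orderTop := by
      apply le_trans _ HahnSeries.min_orderTop_le_orderTop_sub
      rw [hxpot, hxot]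
      apply le_min
      · exact_mod_cast mul_nonneg (by positivity) hpos
      · exact_mod_cast hpos
    rw [hx, ha_ord] at h1
    have : (0 : ℤ) ≤ -(m : ℤ) := by exact_mod_cast h1
    omega

theorem stmt_5 (p : ℕ) (hp : p.Prime) (m : ℕ) (hm : 0 < m) (hpm : ¬ (p ∣ m)) :
    Irreducible ((X : Polynomial (LaurentSeries (ZMod p))) ^ p - X -
      C (HahnSeries.single (-(m : ℤ)) (1 : ZMod p))) := by
  haveI : Fact p.Prime := ⟨hp⟩
  haveI : CharP (LaurentSeries (ZMod p)) p :=
    charP_of_injective_ringHom (HahnSeries.C_injective (Γ := ℤ) (R := ZMod p)) p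
  exact artin_schreier_irreducible p hp _ (laurent_no_root p hp m hm hpm)
end

section
/- Let K = 𝔽_2((t)) be the field of formal Laurent series over the field with two elements (in Lean: LaurentSeries (ZMod 2)). The map ℘ : K → K, ℘(x) = x^2 - x (= x^2 + x in characteristic 2), is an additive group homomorphism, and the quotient additive group K/℘(K) is infinite. -/
open HahnSeries

instance : CharP (LaurentSeries (ZMod 2)) 2 :=
  charP_of_injective_ringHom (algebraMap (ZMod 2) (LaurentSeries (ZMod 2))).injective 2

/-- If `x^2 - x` has odd negative order, we get a contradiction: for `x` of negative order `d`,
`x^2 - x` has order `2d`, even; for `x` of nonnegative order, `x^2 - x` has order `≥ 0`. -/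
theorem stmt_key (x : LaurentSeries (ZMod 2)) (c : ℤ) (hodd : Odd c) (hneg : c < 0) :
    (x ^ 2 - x).orderTop ≠ (c : WithTop ℤ) := by
  intro hx
  have hxne : x ≠ 0 := by
    rintro rfl; simp at hx
  rw [CharTwo.sub_eq_add] at hx
  have hordsq : (x ^ 2).orderTop = ((2 * x.order : ℤ) : WithTop ℤ) := by
    rw [← order_eq_orderTop_of_ne_zero (pow_ne_zero 2 hxne), order_pow]
    norm_num
  have hordx : x.orderTop = (x.order : WithTop ℤ) := (order_eq_orderTop_of_ne_zero hxne).symm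
  rcases lt_or_ge x.order 0 with hd | hd
  · -- order of sum is 2 * x.order, even, but c is odd
    have hlt : (x ^ 2).orderTop < x.orderTop := by
      rw [hordsq, hordx, WithTop.coe_lt_coe]; omega
    have := orderTop_add_eq_left hlt
    rw [hx, hordsq, WithTop.coe_eq_coe] at this
    obtain ⟨k, hk⟩ := hodd
    omega
  · -- both orders are ≥ 0 but c < 0
    have hmin := min_orderTop_le_orderTop_add (x := x ^ 2) (y := x)
    rw [hx, hordsq, hordx] at hmin
    have h1 : ((0 : ℤ) : WithTop ℤ) ≤ min ((2 * x.order : ℤ) : WithTop ℤ) (x.order : WithTop ℤ) := by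
      simp only [le_min_iff, WithTop.coe_le_coe]; omega
    have := le_trans h1 hmin
    rw [WithTop.coe_le_coe] at this
    omega

theorem stmt_7 :
    ∃ ℘ : LaurentSeries (ZMod 2) →+ LaurentSeries (ZMod 2),
      (∀ x : LaurentSeries (ZMod 2), ℘ x = x ^ 2 - x) ∧
      Infinite (LaurentSeries (ZMod 2) ⧸ ℘.range) := by
  refine ⟨{ toFun := fun x => x ^ 2 - x,
            map_zero' := by simp,
            map_add' := fun a b => by
              show (a + b) ^ 2 - (a + b) = (a ^ 2 - a) + (b ^ 2 - b)
              rw [CharTwo.add_sq]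
              ring }, fun x => rfl, ?_⟩
  set ℘ : LaurentSeries (ZMod 2) →+ LaurentSeries (ZMod 2) :=
    { toFun := fun x => x ^ 2 - x,
      map_zero' := by simp,
      map_add' := fun a b => by
        show (a + b) ^ 2 - (a + b) = (a ^ 2 - a) + (b ^ 2 - b)
        rw [CharTwo.add_sq]
        ring } with h℘
  refine Infinite.of_injective
    (fun n : ℕ => QuotientAddGroup.mk (s := ℘.range)
      (HahnSeries.single (-(2 * (n : ℤ) + 1)) (1 : ZMod 2))) ?_
  intro n m h
  by_contra hne
  rw [QuotientAddGroup.eq] at h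
  obtain ⟨x, hx⟩ := h
  have hxsub : x ^ 2 - x =
      HahnSeries.single (-(2 * (n : ℤ) + 1)) (1 : ZMod 2) +
        HahnSeries.single (-(2 * (m : ℤ) + 1)) (1 : ZMod 2) := by
    rw [show x ^ 2 - x = ℘ x from rfl, hx, CharTwo.neg_eq]
  set a : ℤ := -(2 * (n : ℤ) + 1) with ha
  set b : ℤ := -(2 * (m : ℤ) + 1) with hb
  have hab : a ≠ b := by
    simp only [ha, hb]
    intro hh
    exact hne (by omega)
  have hone : (1 : ZMod 2) ≠ 0 := one_ne_zero
  have hy : (HahnSeries.single a (1 : ZMod 2) +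
      HahnSeries.single b (1 : ZMod 2)).orderTop = ((min a b : ℤ) : WithTop ℤ) := by
    rcases lt_or_gt_of_ne hab with hlt | hlt
    · rw [orderTop_add_eq_left (by
        rw [orderTop_single hone, orderTop_single hone, WithTop.coe_lt_coe]; exact hlt),
        orderTop_single hone, min_eq_left hlt.le]
    · rw [orderTop_add_eq_right (by
        rw [orderTop_single hone, orderTop_single hone, WithTop.coe_lt_coe]; exact hlt),
        orderTop_single hone, min_eq_right hlt.le]
  refine stmt_key x (min a b) ?_ ?_ (by rw [hxsub, hy])
  · rcases min_choice a b with hm | hm <;> rw [hm]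
    · exact ⟨-(n : ℤ) - 1, by omega⟩
    · exact ⟨-(m : ℤ) - 1, by omega⟩
  · rcases min_choice a b with hm | hm <;> rw [hm] <;> omega
end

section
/- Let K = 𝔽_2((t)) be the field of formal Laurent series over the field with two elements (in Lean: LaurentSeries (ZMod 2)). Let m and n be distinct odd positive integers. Then there is no f ∈ K with f^2 - f = t^{-m} + t^{-n}; that is, t^{-m} and t^{-n} lie in distinct classes of K/℘(K), where ℘(x) = x^2 - x. -/
theorem stmt_8 (m n : ℕ) (hm : 0 < m) (hn : 0 < n) (hmodd : Odd m) (hnodd : Odd n)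
    (hmn : m ≠ n) :
    ¬ ∃ f : LaurentSeries (ZMod 2),
      f ^ 2 - f = HahnSeries.single (-(m : ℤ)) (1 : ZMod 2) +
                  HahnSeries.single (-(n : ℤ)) (1 : ZMod 2) := by
  rintro ⟨f, hf⟩
  have hne : (-(m : ℤ)) ≠ (-(n : ℤ)) := by
    simp only [neg_inj, Ne, Nat.cast_inj]; exact hmn
  have hf0 : f ≠ 0 := by
    rintro rfl
    have := congrArg (fun g => HahnSeries.coeff g (-(m : ℤ))) hf
    simp [HahnSeries.coeff_single_same, HahnSeries.coeff_single_of_ne hne] at this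
  set d := f.order with hd
  have hpow : (f ^ 2).order = 2 * d := by
    rw [HahnSeries.order_pow, two_nsmul, two_mul]
  rcases lt_or_ge d 0 with hdneg | hdpos
  · -- look at coefficient 2d
    have h1 : (f ^ 2).coeff (2 * d) ≠ 0 := by
      rw [← hpow]
      exact mt HahnSeries.coeff_order_eq_zero.mp (pow_ne_zero 2 hf0)
    have h2 : f.coeff (2 * d) = 0 :=
      HahnSeries.coeff_eq_zero_of_lt_order (by omega)
    have := congrArg (fun g => HahnSeries.coeff g (2 * d)) hf
    simp only [HahnSeries.coeff_sub, HahnSeries.coeff_add, h2, sub_zero] at this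
    have hcase : 2 * d = -(m : ℤ) ∨ 2 * d = -(n : ℤ) := by
      by_contra hc
      push_neg at hc
      rw [HahnSeries.coeff_single_of_ne hc.1, HahnSeries.coeff_single_of_ne hc.2] at this
      simp at this
      exact h1 this
    rcases hcase with h | h
    · obtain ⟨k, hk⟩ := hmodd; omega
    · obtain ⟨k, hk⟩ := hnodd; omega
  · -- look at coefficient -m
    have h1 : (f ^ 2).coeff (-(m : ℤ)) = 0 := by
      apply HahnSeries.coeff_eq_zero_of_lt_order
      rw [hpow]; omega
    have h2 : f.coeff (-(m : ℤ)) = 0 :=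
      HahnSeries.coeff_eq_zero_of_lt_order (by omega)
    have := congrArg (fun g => HahnSeries.coeff g (-(m : ℤ))) hf
    simp [h1, h2, HahnSeries.coeff_single_same,
      HahnSeries.coeff_single_of_ne hne] at this
end
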